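/- Let B be a real Banach space and A ∈ L(B). Then, with the convention log 0 = −∞, limsup_{q→∞} (1/q) log V_q(A) ≤ log(2 |A|_α). -/

import Mathlib

open MeasureTheory Filter Metric Set
open scoped ENNReal NNReal Topology

namespace BanachMET

noncomputable section

/-- `ω q`: the Lebesgue volume of the Euclidean unit ball in `ℝ^q`. -/
def ballVol (q : ℕ) : ℝ≥0∞ :=
  volume (Metric.closedBall (0 : EuclideanSpace ℝ (Fin q)) 1)

/-- Extended logarithm of a real number, with the convention `log t = -∞` for `t ≤ 0`. -/
def elog (t : ℝ) : EReal := if t ≤ 0 then ⊥ else ((Real.log t : ℝ) : EReal)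

/-- Extended logarithm on `ℝ≥0∞`, with `log 0 = -∞` and `log ⊤ = ⊤`. -/
def elogE (t : ℝ≥0∞) : EReal :=
  if t = 0 then ⊥ else if t = ⊤ then ⊤ else ((Real.log t.toReal : ℝ) : EReal)

variable {B B' : Type*} [NormedAddCommGroup B] [NormedSpace ℝ B]
  [NormedAddCommGroup B'] [NormedSpace ℝ B']

section Volume
variable [MeasurableSpace B] [BorelSpace B] [MeasurableSpace B'] [BorelSpace B']

/-- The induced volume `m_E` on a finite dimensional subspace `E ⊆ B`: the unique
translation-invariant Borel measure on `E` assigning measure `ω_q` to the closed unit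
ball of `E`, where `q = dim E`.  (Junk value `0` if `E` is infinite dimensional.) -/
def inducedVolume (E : Submodule ℝ B) : Measure E := by
  classical
  exact if h : FiniteDimensional ℝ E then
    (ballVol (Module.finrank ℝ E) /
        (Module.finBasis ℝ E).addHaar (Metric.closedBall (0 : E) 1)) •
      (Module.finBasis ℝ E).addHaar
  else 0

/-- `det(A|E)`: the determinant of `A` on the finite dimensional subspace `E`,
defined as the ratio `m_{AE}(A(B_E)) / m_E(B_E)` (note `m_E(B_E) = ω_q`) if `A`
is injective on `E`, and `0` otherwise. -/
def detOn (A : B →L[ℝ] B') (E : Submodule ℝ B) : ℝ≥0∞ := by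
  classical
  exact if Set.InjOn A (E : Set B) then
    inducedVolume (E.map (A : B →ₗ[ℝ] B'))
        ((Subtype.val) ⁻¹' (A '' ((Subtype.val : E → B) '' Metric.closedBall (0 : E) 1))) /
      ballVol (Module.finrank ℝ E)
  else 0

/-- `V_q(A)`: the maximal `q`-dimensional volume growth of `A`
(with the convention `V_0(A) = 1`). -/
def maxVol (q : ℕ) (A : B →L[ℝ] B') : ℝ≥0∞ := by
  classical
  exact if q = 0 then 1 else
    ⨆ (E : Submodule ℝ B) (_ : FiniteDimensional ℝ E ∧ Module.finrank ℝ E = q), detOn A E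

end Volume

/-- The measure of noncompactness `|A|_α`. -/
def alphaMeasure (A : B →L[ℝ] B') : ℝ :=
  sInf {r : ℝ | 0 < r ∧ ∃ s : Finset B', (A '' Metric.closedBall 0 1) ⊆ ⋃ y ∈ s, Metric.ball y r}

/-- The annihilator `F° ⊆ B*` of a subspace `F ⊆ B` in the continuous dual. -/
def annih (F : Submodule ℝ B) : Submodule ℝ (B →L[ℝ] ℝ) where
  carrier := {ℓ | ∀ v ∈ F, ℓ v = 0}
  add_mem' := by
    intro a b ha hb v hv
    simp [ha v hv, hb v hv]
  zero_mem' := by intro v hv; simp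
  smul_mem' := by
    intro c ℓ h v hv
    simp [h v hv]

/-- The codimension of a subspace: the dimension of its annihilator in `B*`. -/
def codim (F : Submodule ℝ B) : ℕ := Module.finrank ℝ (annih F)

/-- `sin θ(E,F)` where `θ(E,F)` is the minimal angle from `E` to `F`. -/
def sinAngle (E F : Submodule ℝ B) : ℝ :=
  sInf {d : ℝ | ∃ e ∈ E, ‖e‖ = 1 ∧ ∃ f ∈ F, d = ‖e - f‖}

/-- The norm of the (possibly unbounded) projection onto `E` parallel to `F`. -/
def projNorm (E F : Submodule ℝ B) : ℝ :=
  sSup {r : ℝ | ∃ e ∈ E, ∃ f ∈ F, ‖e + f‖ ≤ 1 ∧ r = ‖e‖}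

/-- The Hausdorff distance `d_H` between the unit spheres of two subspaces. -/
def sphDist (E F : Submodule ℝ B) : ℝ :=
  Metric.hausdorffDist ((E : Set B) ∩ Metric.sphere (0 : B) 1)
    ((F : Set B) ∩ Metric.sphere (0 : B) 1)

/-- The gap `δ(U,V)`. -/
def gap (U V : Submodule ℝ B) : ℝ :=
  sSup {d : ℝ | ∃ u ∈ U, ‖u‖ = 1 ∧ d = Metric.infDist u (V : Set B)}

/-- `π` is the (bounded) projection onto `E` parallel to `F`. -/
def IsProjOnto (E F : Submodule ℝ B) (π : B →L[ℝ] B) : Prop :=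
  (∀ e ∈ E, π e = e) ∧ ∀ f ∈ F, π f = 0

/-- The Gelfand numbers `c_q(A)` (for `q ≥ 1`). -/
def gelfand (q : ℕ) (A : B →L[ℝ] B') : ℝ := by
  classical
  exact if q ≤ 1 then ‖A‖
  else sInf {c : ℝ | ∃ R : Submodule ℝ B, IsClosed (R : Set B) ∧ codim R = q - 1 ∧
    c = ‖A.comp R.subtypeL‖}

/-- `p` is an inner product on the subspace `E ⊆ B`. -/
structure IsInnerOn (E : Submodule ℝ B) (p : B → B → ℝ) : Prop where
  add_left : ∀ u ∈ E, ∀ v ∈ E, ∀ w ∈ E, p (u + v) w = p u w + p v w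
  smul_left : ∀ (c : ℝ), ∀ u ∈ E, ∀ v ∈ E, p (c • u) v = c * p u v
  symm : ∀ u ∈ E, ∀ v ∈ E, p u v = p v u
  posdef : ∀ u ∈ E, u ≠ 0 → 0 < p u u

/-- Iterates `T^n_x = T_{f^{n-1} x} ∘ ⋯ ∘ T_x` of the cocycle `T` over the base map `f`. -/
def iter {X : Type*} (T : X → B →L[ℝ] B) (f : X → X) : ℕ → X → B →L[ℝ] B
  | 0, _ => ContinuousLinearMap.id ℝ B
  | n + 1, x => (iter T f n (f x)).comp (T x)

/-- Uniform measurability: `T` is the pointwise norm limit of a sequence of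
finite-valued measurable maps. -/
def UniformlyMeasurable {X : Type*} [MeasurableSpace X] (T : X → B →L[ℝ] B) : Prop :=
  ∃ S : ℕ → X → B →L[ℝ] B,
    (∀ n, (Set.range (S n)).Finite) ∧
    (∀ n (A : B →L[ℝ] B), MeasurableSet {x | S n x = A}) ∧
    ∀ x, Tendsto (fun n => ‖S n x - T x‖) atTop (𝓝 0)

/-- The slow-growing set `F_λ(x)`. -/
def slowSpace {X : Type*} (T : X → B →L[ℝ] B) (f : X → X) (lam : ℝ) (x : X) : Set B :=
  {v : B | Filter.limsup (fun n : ℕ => (((n : ℝ)⁻¹ : ℝ) : EReal) * elog ‖iter T f n x v‖)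
      atTop ≤ (lam : EReal)}


lemma ballVol_pos (q : ℕ) : 0 < ballVol q :=
  measure_closedBall_pos volume _ one_pos

lemma ballVol_ne_top (q : ℕ) : ballVol q ≠ ⊤ :=
  (isCompact_closedBall _ _).measure_lt_top.ne

section Aux
variable {B : Type*} [NormedAddCommGroup B] [NormedSpace ℝ B]
  [MeasurableSpace B] [BorelSpace B]

lemma inducedVolume_closedBall (F : Submodule ℝ B) [FiniteDimensional ℝ F]
    (x : F) {s : ℝ} (hs : 0 ≤ s) :
    inducedVolume F (Metric.closedBall x s)
      = ENNReal.ofReal (s ^ Module.finrank ℝ F) * ballVol (Module.finrank ℝ F) := by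
  unfold inducedVolume
  rw [dif_pos ‹FiniteDimensional ℝ F›]
  set μ := (Module.finBasis ℝ F).addHaar with hμ
  set K := μ (Metric.closedBall (0 : F) 1) with hK
  have hK0 : K ≠ 0 := (measure_closedBall_pos μ 0 one_pos).ne'
  have hKt : K ≠ ⊤ := (isCompact_closedBall _ _).measure_lt_top.ne
  rw [Measure.smul_apply, Measure.addHaar_closedBall' μ x hs, smul_eq_mul, ← hK]
  calc ballVol (Module.finrank ℝ F) / K * (ENNReal.ofReal (s ^ Module.finrank ℝ F) * K)
      = ENNReal.ofReal (s ^ Module.finrank ℝ F) * (ballVol (Module.finrank ℝ F) / K * K) := by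
        ring
    _ = _ := by rw [ENNReal.div_mul_cancel hK0 hKt]

lemma detOn_le (A : B →L[ℝ] B) {r : ℝ} (hr : 0 < r)
    {t : Finset B} (hcover : (A '' Metric.closedBall 0 1) ⊆ ⋃ y ∈ t, Metric.ball y r)
    (E : Submodule ℝ B) [FiniteDimensional ℝ E] :
    detOn A E ≤ (t.card : ℝ≥0∞) * ENNReal.ofReal ((2 * r) ^ Module.finrank ℝ E) := by
  classical
  by_cases hinj : Set.InjOn A (E : Set B)
  swap
  · unfold detOn; rw [if_neg hinj]; exact zero_le
  set F := E.map (A : B →ₗ[ℝ] B) with hF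
  have hmaps : ∀ x ∈ E, A x ∈ F := fun x hx => Submodule.mem_map_of_mem hx
  let φ : E →ₗ[ℝ] F := A.toLinearMap.restrict hmaps
  have hφinj : Function.Injective φ := by
    intro x y h
    have : A (x : B) = A (y : B) := congrArg Subtype.val h
    exact Subtype.ext (hinj x.2 y.2 this)
  have hφsurj : Function.Surjective φ := by
    rintro ⟨v, hv⟩
    rw [Submodule.mem_map] at hv
    obtain ⟨x, hx, hAx⟩ := hv
    exact ⟨⟨x, hx⟩, Subtype.ext hAx⟩
  let e : E ≃ₗ[ℝ] F := LinearEquiv.ofBijective φ ⟨hφinj, hφsurj⟩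
  haveI : FiniteDimensional ℝ F := Module.Finite.equiv e
  have hrank : Module.finrank ℝ F = Module.finrank ℝ E := e.finrank_eq.symm
  set S : Set F :=
    (Subtype.val) ⁻¹' (A '' ((Subtype.val : E → B) '' Metric.closedBall (0 : E) 1)) with hS
  have hSmem : ∀ v : F, v ∈ S → (v : B) ∈ ⋃ y ∈ t, Metric.ball y r := by
    intro v hv
    apply hcover
    obtain ⟨b, ⟨w, hw, rfl⟩, hb⟩ := hv
    exact ⟨(w : B), by
      simpa [Metric.mem_closedBall, dist_zero_right] using
        (by simpa [Metric.mem_closedBall, dist_zero_right] using hw : ‖w‖ ≤ 1), hb⟩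
  set g : B → Set F := fun y =>
    if h : ∃ z : F, z ∈ S ∧ (z : B) ∈ Metric.ball y r
    then Metric.closedBall h.choose (2 * r) else ∅ with hg
  have hsub : S ⊆ ⋃ y ∈ t, g y := by
    intro v hv
    obtain ⟨y, hy, hvy⟩ := Set.mem_iUnion₂.1 (hSmem v hv)
    refine Set.mem_iUnion₂.2 ⟨y, hy, ?_⟩
    have hex : ∃ z : F, z ∈ S ∧ (z : B) ∈ Metric.ball y r := ⟨v, hv, hvy⟩
    rw [hg]
    simp only [dif_pos hex]
    obtain ⟨hz1, hz2⟩ := hex.choose_spec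
    have h1 : dist (v : B) y < r := hvy
    have h2 : dist (hex.choose : B) y < r := hz2
    have : dist v hex.choose ≤ 2 * r := by
      rw [Subtype.dist_eq]
      calc dist (v : B) (hex.choose : B) ≤ dist (v : B) y + dist y (hex.choose : B) :=
            dist_triangle _ _ _
        _ ≤ 2 * r := by rw [dist_comm y]; linarith
    exact this
  have hmeas : inducedVolume F S ≤
      (t.card : ℝ≥0∞) * (ENNReal.ofReal ((2 * r) ^ Module.finrank ℝ F)
        * ballVol (Module.finrank ℝ F)) := by
    refine (measure_mono hsub).trans ((measure_biUnion_finset_le t g).trans ?_)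
    have hb : ∀ y ∈ t, inducedVolume F (g y) ≤
        ENNReal.ofReal ((2 * r) ^ Module.finrank ℝ F) * ballVol (Module.finrank ℝ F) := by
      intro y _
      rw [hg]
      dsimp only
      split_ifs with h
      · rw [inducedVolume_closedBall F _ (by linarith)]
      · simp
    calc ∑ y ∈ t, inducedVolume F (g y)
        ≤ ∑ _y ∈ t, (ENNReal.ofReal ((2 * r) ^ Module.finrank ℝ F)
          * ballVol (Module.finrank ℝ F)) := Finset.sum_le_sum hb
      _ = _ := by rw [Finset.sum_const, nsmul_eq_mul]
  unfold detOn
  rw [if_pos hinj]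
  refine ENNReal.div_le_of_le_mul ?_
  rw [← hF, ← hS]
  calc inducedVolume F S ≤ _ := hmeas
    _ = (t.card : ℝ≥0∞) * ENNReal.ofReal ((2 * r) ^ Module.finrank ℝ E)
        * ballVol (Module.finrank ℝ E) := by rw [hrank]; ring

lemma maxVol_le (A : B →L[ℝ] B) {r : ℝ} (hr : 0 < r)
    {t : Finset B} (hcover : (A '' Metric.closedBall 0 1) ⊆ ⋃ y ∈ t, Metric.ball y r)
    {q : ℕ} (hq : q ≠ 0) :
    maxVol q A ≤ (t.card : ℝ≥0∞) * ENNReal.ofReal ((2 * r) ^ q) := by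
  unfold maxVol
  rw [if_neg hq]
  refine iSup_le fun E => iSup_le fun hE => ?_
  obtain ⟨hfd, hrank⟩ := hE
  haveI := hfd
  have := detOn_le A hr hcover E
  rwa [hrank] at this

end Aux

lemma elogE_le_log {a : ℝ≥0∞} {c : ℝ} (hc : 0 < c) (h : a ≤ ENNReal.ofReal c) :
    elogE a ≤ ((Real.log c : ℝ) : EReal) := by
  unfold elogE
  split_ifs with h0 ht
  · exact bot_le
  · exact absurd (ht ▸ h) (by simp [lt_top_iff_ne_top.1 ENNReal.ofReal_lt_top])
  · exact EReal.coe_le_coe_iff.2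
      (Real.log_le_log (ENNReal.toReal_pos h0 ht) (ENNReal.toReal_le_of_le_ofReal hc.le h))

lemma coe_mul_le_of_le {c y : ℝ} (hc : 0 < c) {x : EReal} (h : x ≤ (y : EReal)) :
    (c : EReal) * x ≤ ((c * y : ℝ) : EReal) := by
  induction x with
  | bot => rw [EReal.coe_mul_bot_of_pos hc]; exact bot_le
  | coe z =>
      rw [← EReal.coe_mul]
      exact EReal.coe_le_coe_iff.2
        (mul_le_mul_of_nonneg_left (EReal.coe_le_coe_iff.1 h) hc.le)
  | top => exact absurd h (by simp)

lemma limsup_le_log {B : Type*} [NormedAddCommGroup B] [NormedSpace ℝ B]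
    [MeasurableSpace B] [BorelSpace B] (A : B →L[ℝ] B) {r : ℝ} (hr : 0 < r)
    {t : Finset B} (ht : t.Nonempty)
    (hcover : (A '' Metric.closedBall 0 1) ⊆ ⋃ y ∈ t, Metric.ball y r) :
    Filter.limsup (fun q : ℕ => (((q : ℝ)⁻¹ : ℝ) : EReal) * elogE (maxVol q A)) atTop
      ≤ ((Real.log (2 * r) : ℝ) : EReal) := by
  set N : ℝ := (t.card : ℝ) with hN
  have hN1 : (1 : ℝ) ≤ N := by
    have h : 1 ≤ t.card := ht.card_pos
    rw [hN]; exact_mod_cast h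
  have hN0 : (0 : ℝ) < N := lt_of_lt_of_le one_pos hN1
  have h2r : (0 : ℝ) < 2 * r := by linarith
  set h : ℕ → ℝ := fun q => (q : ℝ)⁻¹ * Real.log (N * (2 * r) ^ q) with hh
  have key : ∀ᶠ q : ℕ in atTop,
      (((q : ℝ)⁻¹ : ℝ) : EReal) * elogE (maxVol q A) ≤ ((h q : ℝ) : EReal) := by
    filter_upwards [eventually_ge_atTop 1] with q hq
    have hqR : (0 : ℝ) < (q : ℝ) := by exact_mod_cast Nat.pos_of_ne_zero (by omega)
    have hq0 : (0 : ℝ) < (q : ℝ)⁻¹ := by positivity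
    refine coe_mul_le_of_le hq0 (elogE_le_log (mul_pos hN0 (pow_pos h2r q)) ?_)
    calc maxVol q A ≤ (t.card : ℝ≥0∞) * ENNReal.ofReal ((2 * r) ^ q) :=
          maxVol_le A hr hcover (by omega)
      _ = ENNReal.ofReal (N * (2 * r) ^ q) := by
          rw [ENNReal.ofReal_mul hN0.le, hN, ENNReal.ofReal_natCast]
  have hEq : (fun q : ℕ => (q : ℝ)⁻¹ * Real.log N + Real.log (2 * r)) =ᶠ[atTop] h := by
    filter_upwards [eventually_ge_atTop 1] with q hq
    have hqR : ((q : ℝ)) ≠ 0 := by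
      exact_mod_cast Nat.pos_of_ne_zero (by omega) |>.ne'
    show (q : ℝ)⁻¹ * Real.log N + Real.log (2 * r) = h q
    rw [hh]
    dsimp only
    rw [Real.log_mul hN0.ne' (pow_pos h2r q).ne', Real.log_pow, mul_add]
    congr 1
    rw [← mul_assoc, inv_mul_cancel₀ hqR, one_mul]
  have htendR : Tendsto (fun q : ℕ => (q : ℝ)⁻¹ * Real.log N + Real.log (2 * r)) atTop
      (𝓝 (Real.log (2 * r))) := by
    have h1 : Tendsto (fun q : ℕ => ((q : ℝ))⁻¹) atTop (𝓝 0) :=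
      tendsto_natCast_atTop_atTop.inv_tendsto_atTop
    simpa using (h1.mul_const (Real.log N)).add
      (tendsto_const_nhds (x := Real.log (2 * r)))
  have hhtend : Tendsto (fun q : ℕ => ((h q : ℝ) : EReal)) atTop
      (𝓝 ((Real.log (2 * r) : ℝ) : EReal)) := by
    exact (continuous_coe_real_ereal.tendsto _).comp
      (Tendsto.congr' hEq htendR)
  calc Filter.limsup (fun q : ℕ => (((q : ℝ)⁻¹ : ℝ) : EReal) * elogE (maxVol q A)) atTop
      ≤ Filter.limsup (fun q : ℕ => ((h q : ℝ) : EReal)) atTop := limsup_le_limsup key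
    _ = _ := hhtend.limsup_eq


theorem statement18
    {B : Type*} [NormedAddCommGroup B] [NormedSpace ℝ B] [CompleteSpace B]
    [MeasurableSpace B] [BorelSpace B] (A : B →L[ℝ] B) :
    Filter.limsup (fun q : ℕ => (((q : ℝ)⁻¹ : ℝ) : EReal) * elogE (maxVol q A)) atTop ≤
      elog (2 * alphaMeasure A) := by
  classical
  set Sset : Set ℝ := {r : ℝ | 0 < r ∧ ∃ s : Finset B,
      (A '' Metric.closedBall 0 1) ⊆ ⋃ y ∈ s, Metric.ball y r} with hSset
  have hmem : ‖A‖ + 1 ∈ Sset := by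
    refine ⟨by positivity, ({0} : Finset B), ?_⟩
    rintro x ⟨v, hv, rfl⟩
    refine Set.mem_iUnion₂.2 ⟨0, Finset.mem_singleton_self 0, ?_⟩
    rw [Metric.mem_ball, dist_zero_right]
    have hv1 : ‖v‖ ≤ 1 := by simpa [Metric.mem_closedBall, dist_zero_right] using hv
    calc ‖A v‖ ≤ ‖A‖ * ‖v‖ := A.le_opNorm v
      _ ≤ ‖A‖ * 1 := mul_le_mul_of_nonneg_left hv1 (norm_nonneg _)
      _ < ‖A‖ + 1 := by linarith
  have hne : Sset.Nonempty := ⟨_, hmem⟩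
  have hbdd : BddBelow Sset := ⟨0, fun r hr => hr.1.le⟩
  have hαdef : alphaMeasure A = sInf Sset := rfl
  have hα0 : 0 ≤ alphaMeasure A := by
    rw [hαdef]; exact le_csInf hne fun r hr => hr.1.le
  set L := Filter.limsup (fun q : ℕ => (((q : ℝ)⁻¹ : ℝ) : EReal) * elogE (maxVol q A)) atTop
    with hL
  have key : ∀ r ∈ Sset, L ≤ ((Real.log (2 * r) : ℝ) : EReal) := by
    rintro r ⟨hr, t, hcov⟩
    have hcov' : (A '' Metric.closedBall 0 1) ⊆
        ⋃ y ∈ insert (0 : B) t, Metric.ball y r :=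
      hcov.trans (Set.iUnion₂_mono' fun y hy =>
        ⟨y, Finset.mem_insert_of_mem hy, subset_rfl⟩)
    exact limsup_le_log A hr ⟨0, Finset.mem_insert_self 0 t⟩ hcov'
  have step : ∀ n : ℕ,
      L ≤ ((Real.log (2 * alphaMeasure A + 2 / ((n : ℝ) + 1)) : ℝ) : EReal) := by
    intro n
    have hpos : (0 : ℝ) < 1 / ((n : ℝ) + 1) := by positivity
    obtain ⟨r, hrS, hrlt⟩ := (csInf_lt_iff hbdd hne).1
      (show sInf Sset < alphaMeasure A + 1 / ((n : ℝ) + 1) by rw [← hαdef]; linarith)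
    refine (key r hrS).trans ?_
    refine EReal.coe_le_coe_iff.2 (Real.log_le_log (by linarith [hrS.1]) ?_)
    have h2 : 2 / ((n : ℝ) + 1) = 2 * (1 / ((n : ℝ) + 1)) := by ring
    linarith
  have hseq : Tendsto (fun n : ℕ => 2 / ((n : ℝ) + 1)) atTop (𝓝 0) := by
    have h2 := tendsto_one_div_add_atTop_nhds_zero_nat.const_mul (2 : ℝ)
    simpa [mul_one_div, div_eq_mul_inv] using h2
  have htend : Tendsto
      (fun n : ℕ => ((Real.log (2 * alphaMeasure A + 2 / ((n : ℝ) + 1)) : ℝ) : EReal))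
      atTop (𝓝 (elog (2 * alphaMeasure A))) := by
    rcases eq_or_lt_of_le hα0 with h0 | hpos
    · unfold elog
      rw [if_pos (by rw [← h0]; norm_num)]
      rw [EReal.tendsto_nhds_bot_iff_real]
      intro x
      have h1 : Tendsto (fun n : ℕ => 2 * alphaMeasure A + 2 / ((n : ℝ) + 1)) atTop
          (𝓝[>] 0) := by
        rw [← h0]
        apply tendsto_nhdsWithin_of_tendsto_nhds_of_eventually_within
        · simpa using hseq
        · filter_upwards with n
          have : (0:ℝ) < 2 / ((n : ℝ) + 1) := by positivity
          simpa using this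
      have hlog : Tendsto
          (fun n : ℕ => Real.log (2 * alphaMeasure A + 2 / ((n : ℝ) + 1))) atTop atBot :=
        Real.tendsto_log_nhdsGT_zero.comp h1
      filter_upwards [hlog.eventually (eventually_lt_atBot x)] with n hn
      exact EReal.coe_lt_coe_iff.2 hn
    · unfold elog
      rw [if_neg (by push_neg; linarith)]
      apply Filter.Tendsto.comp (continuous_coe_real_ereal.tendsto _)
      have hcont : ContinuousAt Real.log (2 * alphaMeasure A) :=
        Real.continuousAt_log (by linarith)
      have h1 : Tendsto (fun n : ℕ => 2 * alphaMeasure A + 2 / ((n : ℝ) + 1)) atTop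
          (𝓝 (2 * alphaMeasure A)) := by
        simpa using (tendsto_const_nhds (x := 2 * alphaMeasure A)).add hseq
      exact hcont.tendsto.comp h1
  exact ge_of_tendsto' htend step


end
end BanachMET
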